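/- arXiv:1501.07414 — 3 statements merged into one kernel-verified Lean document; each statement's English description precedes it below -/
import Mathlib

section
/- If f̃ is the least-squares approximation of f represented on S̃ ⊆ S, where f(x) = Σ_{Λ∈S} β^Λ Π_{k∈Λ} x_k, then SSE(f, f̃) = Σ_{Λ ∈ S∖S̃} β^Λ · Σ_{x ∈ Ω_Λ} (f(x) − f̃(x)). -/
open Finset

/-- The monomial `∏_{k ∈ Λ} x_k` for binary `x`. -/
noncomputable def mono {n : ℕ} (Λ : Finset (Fin n)) (x : Fin n → Bool) : ℝ :=
  ∏ k ∈ Λ, (if x k then (1 : ℝ) else 0)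

/-- Binary polynomial represented on the family `S` with coefficients `β`. -/
noncomputable def poly {n : ℕ} (S : Finset (Finset (Fin n))) (β : Finset (Fin n) → ℝ)
    (x : Fin n → Bool) : ℝ :=
  ∑ Λ ∈ S, β Λ * mono Λ x

/-- Error sum of squares between two pseudo-Boolean functions. -/
noncomputable def SSE {n : ℕ} (f g : (Fin n → Bool) → ℝ) : ℝ :=
  ∑ x : Fin n → Bool, (f x - g x) ^ 2

/-- `g` is the least-squares approximation of `f` represented on `S`. -/
def isLSA {n : ℕ} (S : Finset (Finset (Fin n))) (f g : (Fin n → Bool) → ℝ) : Prop :=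
  (∃ β : Finset (Fin n) → ℝ, g = poly S β) ∧
    ∀ γ : Finset (Fin n) → ℝ, SSE f g ≤ SSE f (poly S γ)

/-- `Ω_λ`: the binary vectors with `x_k = 1` for all `k ∈ λ`. -/
def Omega {n : ℕ} (lam : Finset (Fin n)) : Finset (Fin n → Bool) :=
  Finset.univ.filter (fun x => ∀ k ∈ lam, x k = true)

lemma mono_eq {n : ℕ} (Λ : Finset (Fin n)) (x : Fin n → Bool) :
    mono Λ x = if (∀ k ∈ Λ, x k = true) then 1 else 0 := by
  unfold mono
  by_cases hx : ∀ k ∈ Λ, x k = true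
  · rw [if_pos hx, Finset.prod_eq_one]
    intro k hk; rw [hx k hk]; simp
  · rw [if_neg hx]
    push_neg at hx
    obtain ⟨k, hk, hxk⟩ := hx
    exact Finset.prod_eq_zero hk (by simp [hxk])

lemma sum_mono_mul {n : ℕ} (Λ : Finset (Fin n)) (c : (Fin n → Bool) → ℝ) :
    ∑ x : Fin n → Bool, mono Λ x * c x = ∑ x ∈ Omega Λ, c x := by
  rw [Omega, Finset.sum_filter]
  congr 1 with x
  rw [mono_eq]
  split <;> simp

lemma quad_zero (a c : ℝ) (ha : 0 ≤ a) (h : ∀ t : ℝ, 0 ≤ t ^ 2 * a - 2 * t * c) :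
    c = 0 := by
  have h1 := h (c / (a + 1))
  have hpos : (0:ℝ) < a + 1 := by linarith
  have h2 : 0 ≤ ((c / (a + 1)) ^ 2 * a - 2 * (c / (a + 1)) * c) * (a + 1) ^ 2 :=
    mul_nonneg h1 (sq_nonneg _)
  have h3 : ((c / (a + 1)) ^ 2 * a - 2 * (c / (a + 1)) * c) * (a + 1) ^ 2 =
      c ^ 2 * a - 2 * c ^ 2 * (a + 1) := by
    field_simp
  rw [h3] at h2
  nlinarith [sq_nonneg c]

/-- The error sum of squares is a sum over the removed interactions. -/
theorem sse_removed_interactions {n : ℕ} (S Stil : Finset (Finset (Fin n)))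
    (hsub : Stil ⊆ S) (β : Finset (Fin n) → ℝ) (ftil : (Fin n → Bool) → ℝ)
    (h : isLSA Stil (poly S β) ftil) :
    SSE (poly S β) ftil =
      ∑ Λ ∈ S \ Stil, β Λ * ∑ x ∈ Omega Λ, (poly S β x - ftil x) := by
  obtain ⟨⟨γ, hγ⟩, hmin⟩ := h
  set f := poly S β with hf
  set g := ftil with hg
  -- orthogonality
  have orth : ∀ Λ ∈ Stil, ∑ x : Fin n → Bool, mono Λ x * (f x - g x) = 0 := by
    intro Λ hΛ
    set c := ∑ x : Fin n → Bool, mono Λ x * (f x - g x) with hc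
    set a := ∑ x : Fin n → Bool, mono Λ x ^ 2 with ha
    have ha0 : 0 ≤ a := Finset.sum_nonneg fun x _ => sq_nonneg _
    apply quad_zero a c ha0
    intro t
    have key : poly Stil (fun M => γ M + if M = Λ then t else 0) =
        fun x => g x + t * mono Λ x := by
      funext x
      simp only [poly, add_mul, Finset.sum_add_distrib, ite_mul, zero_mul,
        Finset.sum_ite_eq' Stil Λ, hΛ, if_pos]
      rw [hγ]; rfl
    have := hmin (fun M => γ M + if M = Λ then t else 0)
    rw [key] at this
    have expand : SSE f (fun x => g x + t * mono Λ x) =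
        SSE f g - 2 * t * c + t ^ 2 * a := by
      unfold SSE
      rw [hc, ha, Finset.mul_sum, Finset.mul_sum, ← Finset.sum_sub_distrib,
        ← Finset.sum_add_distrib]
      apply Finset.sum_congr rfl
      intro x _
      ring
    rw [expand] at this
    linarith
  have gsum : ∑ x : Fin n → Bool, g x * (f x - g x) = 0 := by
    have : ∀ x, g x * (f x - g x) = ∑ M ∈ Stil, γ M * (mono M x * (f x - g x)) := by
      intro x
      rw [hγ]; simp only [poly, Finset.sum_mul]
      apply Finset.sum_congr rfl; intro M _; ring
    simp only [this]
    rw [Finset.sum_comm]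
    apply Finset.sum_eq_zero
    intro M hM
    rw [← Finset.mul_sum, orth M hM, mul_zero]
  have fsum : ∑ x : Fin n → Bool, f x * (f x - g x) =
      ∑ Λ ∈ S, β Λ * ∑ x : Fin n → Bool, mono Λ x * (f x - g x) := by
    simp only [hf, poly, Finset.sum_mul]
    rw [Finset.sum_comm]
    apply Finset.sum_congr rfl
    intro Λ _
    rw [Finset.mul_sum]
    apply Finset.sum_congr rfl; intro x _; ring
  have split : ∑ Λ ∈ S, β Λ * ∑ x : Fin n → Bool, mono Λ x * (f x - g x) =
      ∑ Λ ∈ S \ Stil, β Λ * ∑ x : Fin n → Bool, mono Λ x * (f x - g x) := by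
    rw [← Finset.sum_sdiff hsub]
    have : ∑ Λ ∈ Stil, β Λ * ∑ x : Fin n → Bool, mono Λ x * (f x - g x) = 0 := by
      apply Finset.sum_eq_zero
      intro Λ hΛ
      rw [orth Λ hΛ, mul_zero]
    rw [this, add_zero]
  calc SSE f g = ∑ x : Fin n → Bool, (f x * (f x - g x) - g x * (f x - g x)) := by
        apply Finset.sum_congr rfl; intro x _; ring
    _ = ∑ x : Fin n → Bool, f x * (f x - g x) - ∑ x : Fin n → Bool, g x * (f x - g x) := by
        rw [Finset.sum_sub_distrib]
    _ = ∑ Λ ∈ S \ Stil, β Λ * ∑ x : Fin n → Bool, mono Λ x * (f x - g x) := by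
        rw [gsum, sub_zero, fsum, split]
    _ = ∑ Λ ∈ S \ Stil, β Λ * ∑ x ∈ Omega Λ, (f x - g x) := by
        apply Finset.sum_congr rfl; intro Λ _; rw [sum_mono_mul]
end

section
/- If f̃ is the least-squares approximation of f on S̃ = S ∖ {λ}, i.e., removing the single interaction β^λ, then SSE(f, f̃) = β^λ · Σ_{x ∈ Ω_λ} (f(x) − f̃(x)). -/
open Finset

lemma mono_eq_ite {n : ℕ} (lam : Finset (Fin n)) (x : Fin n → Bool) :
    mono lam x = if ∀ k ∈ lam, x k = true then (1 : ℝ) else 0 := by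
  unfold mono
  by_cases h : ∀ k ∈ lam, x k = true
  · rw [if_pos h]
    exact Finset.prod_eq_one fun k hk => by rw [h k hk]; simp
  · rw [if_neg h]
    push_neg at h
    obtain ⟨k, hk, hxk⟩ := h
    exact Finset.prod_eq_zero hk (by simp [hxk])

lemma poly_add_smul {n : ℕ} (T : Finset (Finset (Fin n))) (γ δ : Finset (Fin n) → ℝ)
    (t : ℝ) (x : Fin n → Bool) :
    poly T (fun Λ => γ Λ + t * δ Λ) x = poly T γ x + t * poly T δ x := by
  simp [poly, add_mul, Finset.sum_add_distrib, Finset.mul_sum, mul_assoc]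

lemma poly_sub {n : ℕ} (T : Finset (Finset (Fin n))) (γ δ : Finset (Fin n) → ℝ)
    (x : Fin n → Bool) :
    poly T (fun Λ => γ Λ - δ Λ) x = poly T γ x - poly T δ x := by
  simp [poly, sub_mul, Finset.sum_sub_distrib]

lemma orth {n : ℕ} (T : Finset (Finset (Fin n))) (f ftil : (Fin n → Bool) → ℝ)
    (h : isLSA T f ftil) (δ : Finset (Fin n) → ℝ) :
    ∑ x : Fin n → Bool, (f x - ftil x) * poly T δ x = 0 := by
  obtain ⟨⟨γ, hγ⟩, hmin⟩ := h
  set B := ∑ x : Fin n → Bool, (f x - ftil x) * poly T δ x with hB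
  set A := ∑ x : Fin n → Bool, (poly T δ x) ^ 2 with hA
  have hA0 : 0 ≤ A := Finset.sum_nonneg fun x _ => sq_nonneg _
  have key : ∀ t : ℝ, 0 ≤ t ^ 2 * A - 2 * t * B := by
    intro t
    have hexp : SSE f (poly T (fun Λ => γ Λ + t * δ Λ)) =
        SSE f ftil + (t ^ 2 * A - 2 * t * B) := by
      have hpt : ∀ x : Fin n → Bool,
          (f x - poly T (fun Λ => γ Λ + t * δ Λ) x) ^ 2 =
          (f x - ftil x) ^ 2 + (t ^ 2 * (poly T δ x) ^ 2
            - 2 * t * ((f x - ftil x) * poly T δ x)) := by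
        intro x
        rw [poly_add_smul, hγ]
        ring
      simp only [SSE, hpt, Finset.sum_add_distrib, Finset.sum_sub_distrib,
        ← Finset.mul_sum, ← hA, ← hB]
    have := hmin (fun Λ => γ Λ + t * δ Λ)
    linarith
  have hA1 : (0:ℝ) < A + 1 := by linarith
  have h1 := key (B / (A + 1))
  have ht : B / (A + 1) * (A + 1) = B := div_mul_cancel₀ B (ne_of_gt hA1)
  set t := B / (A + 1) with htdef
  rw [← ht] at h1 ⊢
  have ht0 : t = 0 := by nlinarith [sq_nonneg t]
  rw [ht0, zero_mul]

/-- Error sum of squares when removing a single interaction. -/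
theorem sse_remove_one {n : ℕ} (S : Finset (Finset (Fin n)))
    (lam : Finset (Fin n)) (hlam : lam ∈ S) (β : Finset (Fin n) → ℝ)
    (ftil : (Fin n → Bool) → ℝ)
    (h : isLSA (S.erase lam) (poly S β) ftil) :
    SSE (poly S β) ftil = β lam * ∑ x ∈ Omega lam, (poly S β x - ftil x) := by
  obtain ⟨⟨γ, hγ⟩, -⟩ := id h
  have horth := orth (S.erase lam) (poly S β) ftil h (fun Λ => β Λ - γ Λ)
  have hsplit : ∀ x, poly S β x - ftil x =
      β lam * mono lam x + poly (S.erase lam) (fun Λ => β Λ - γ Λ) x := by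
    intro x
    rw [poly_sub, hγ]
    have hsum := Finset.add_sum_erase S (fun Λ => β Λ * mono Λ x) hlam
    simp only [poly]
    linarith [hsum]
  calc SSE (poly S β) ftil
      = ∑ x : Fin n → Bool, (poly S β x - ftil x) *
          (β lam * mono lam x + poly (S.erase lam) (fun Λ => β Λ - γ Λ) x) := by
        unfold SSE
        refine Finset.sum_congr rfl fun x _ => ?_
        rw [← hsplit x]; ring
    _ = β lam * ∑ x : Fin n → Bool, (poly S β x - ftil x) * mono lam x
        + ∑ x : Fin n → Bool, (poly S β x - ftil x) *
            poly (S.erase lam) (fun Λ => β Λ - γ Λ) x := by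
        rw [Finset.mul_sum, ← Finset.sum_add_distrib]
        refine Finset.sum_congr rfl fun x _ => ?_; ring
    _ = β lam * ∑ x ∈ Omega lam, (poly S β x - ftil x) := by
        rw [horth, add_zero]
        congr 1
        rw [Omega, Finset.sum_filter]
        refine Finset.sum_congr rfl fun x _ => ?_
        rw [mono_eq_ite]
        by_cases hc : ∀ k ∈ lam, x k = true <;> simp [hc]
end

section
/- (SOIR SSE) With f and its SOIR approximation f̃ as above, SSE(f, f̃) = (1/4) Σ_{x ∈ Ω_{{i,j}}} ( Σ_{Λ ∈ S_{{i,j}}} β^Λ Π_{k ∈ Λ∖{i,j}} x_k )², where Ω_{{i,j}} = {x ∈ {0,1}^n : x_i = x_j = 1}. -/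
open Finset

-- Auxiliary definitions and lemmas

noncomputable def chi {n : ℕ} (k : Fin n) (x : Fin n → Bool) : ℝ := if x k then 1 else 0

lemma mono_update {n : ℕ} (Λ : Finset (Fin n)) (x : Fin n → Bool) (k : Fin n) (b : Bool)
    (hk : k ∉ Λ) : mono Λ (Function.update x k b) = mono Λ x := by
  unfold mono
  refine Finset.prod_congr rfl fun m hm => ?_
  rw [Function.update_of_ne (by rintro rfl; exact hk hm)]

lemma sum_flip {n : ℕ} (i : Fin n) (F : (Fin n → Bool) → ℝ)
    (hF : ∀ x, F (Function.update x i (!x i)) = - F x) :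
    ∑ x : Fin n → Bool, F x = 0 := by
  have hinv : Function.Involutive (fun x : Fin n → Bool => Function.update x i (!x i)) := by
    intro x
    funext k
    by_cases h : k = i
    · subst h; simp [Function.update_self]
    · simp [Function.update_of_ne h]
  have key : ∀ x : Fin n → Bool, F x = - F (Function.update x i (!x i)) := by
    intro x
    have h1 := hF (Function.update x i (!x i))
    have h0 : Function.update (Function.update x i (!x i)) i (!(Function.update x i (!x i) i)) = x := hinv x
    rw [h0] at h1
    linarith
  have h2 := Fintype.sum_equiv hinv.toPerm F (fun x => - F x) (fun x => key x)
  have h3 : ∑ x : Fin n → Bool, F x = - ∑ x : Fin n → Bool, F x := by simpa using h2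
  linarith

-- the submodule of functions representable on S1
def polySpace {n : ℕ} (S1 : Finset (Finset (Fin n))) : Submodule ℝ ((Fin n → Bool) → ℝ) where
  carrier := {g | ∃ γ, g = poly S1 γ}
  add_mem' := by
    rintro a b ⟨γ, rfl⟩ ⟨δ, rfl⟩
    exact ⟨γ + δ, by funext x; simp [poly, Finset.sum_add_distrib, add_mul]⟩
  zero_mem' := ⟨0, by funext x; simp [poly]⟩
  smul_mem' := by
    rintro c a ⟨γ, rfl⟩
    exact ⟨c • γ, by funext x; simp [poly, Finset.mul_sum, mul_assoc]⟩

lemma mono_mem_polySpace {n : ℕ} (S1 : Finset (Finset (Fin n))) (Λ' : Finset (Fin n))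
    (h : Λ' ∈ S1) : mono Λ' ∈ polySpace S1 := by
  refine ⟨fun Λ => if Λ = Λ' then 1 else 0, ?_⟩
  funext x
  simp only [poly, ite_mul, one_mul, zero_mul]
  rw [Finset.sum_ite_eq' S1 Λ' (fun Λ => mono Λ x)]
  simp [h]

lemma sum_phi_zero {n : ℕ} (i j : Fin n) (hji : j ≠ i) (h : (Fin n → Bool) → ℝ)
    (hi : ∀ x b, h (Function.update x i b) = h x) :
    ∑ x : Fin n → Bool, (chi i x - 1/2) * (chi j x - 1/2) * h x = 0 := by
  apply sum_flip i
  intro x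
  have h1 : chi i (Function.update x i (!x i)) - 1/2 = -(chi i x - 1/2) := by
    unfold chi
    rw [Function.update_self]
    cases hx : x i <;> norm_num
  have h2 : chi j (Function.update x i (!x i)) = chi j x := by
    unfold chi; rw [Function.update_of_ne hji]
  rw [h1, h2, hi]; ring

lemma sum_half {n : ℕ} (k : Fin n) (s : Finset (Fin n → Bool))
    (hs : ∀ x ∈ s, ∀ b, Function.update x k b ∈ s)
    (G : (Fin n → Bool) → ℝ) (hG : ∀ x b, G (Function.update x k b) = G x) :
    ∑ x ∈ s, G x = 2 * ∑ x ∈ s.filter (fun x => x k = true), G x := by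
  rw [← Finset.sum_filter_add_sum_filter_not s (fun x => x k = true)]
  have hswap : ∑ x ∈ s.filter (fun x => ¬ x k = true), G x
      = ∑ x ∈ s.filter (fun x => x k = true), G x := by
    apply Finset.sum_nbij' (i := fun x => Function.update x k true)
      (j := fun x => Function.update x k false)
    · intro a ha
      rw [Finset.mem_filter] at ha ⊢
      exact ⟨hs a ha.1 true, Function.update_self _ _ _⟩
    · intro a ha
      rw [Finset.mem_filter] at ha ⊢
      refine ⟨hs a ha.1 false, ?_⟩
      simp [Function.update_self]
    · intro a ha
      rw [Finset.mem_filter] at ha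
      funext m
      by_cases hm : m = k
      · subst hm
        simp [Function.update_self]
        cases hma : a m
        · rfl
        · exact absurd hma ha.2
      · simp [Function.update_of_ne hm]
    · intro a ha
      rw [Finset.mem_filter] at ha
      funext m
      by_cases hm : m = k
      · subst hm
        simp [Function.update_self]
        exact ha.2
      · simp [Function.update_of_ne hm]
    · intro a _
      exact (hG a true).symm
  rw [hswap]; ring

lemma sum_four {n : ℕ} (i j : Fin n) (hij : i ≠ j) (G : (Fin n → Bool) → ℝ)
    (hGi : ∀ x b, G (Function.update x i b) = G x)
    (hGj : ∀ x b, G (Function.update x j b) = G x) :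
    ∑ x : Fin n → Bool, G x
      = 4 * ∑ x ∈ Finset.univ.filter (fun x : Fin n → Bool => x i = true ∧ x j = true), G x := by
  rw [sum_half i Finset.univ (by simp) G hGi]
  rw [sum_half j (Finset.univ.filter (fun x => x i = true))
      (by
        intro x hx b
        rw [Finset.mem_filter] at hx ⊢
        refine ⟨Finset.mem_univ _, ?_⟩
        rw [Function.update_of_ne hij, hx.2]) G hGj]
  rw [Finset.filter_filter]
  ring


/-- Error sum of squares of the SOIR approximation. -/
theorem soir_sse {n : ℕ} (S : Finset (Finset (Fin n)))
    (hdense : ∀ Λ ∈ S, ∀ lam ⊆ Λ, lam ∈ S)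
    (i j : Fin n) (hij : i ≠ j) (hmem : ({i, j} : Finset (Fin n)) ∈ S)
    (β : Finset (Fin n) → ℝ) (ftil : (Fin n → Bool) → ℝ)
    (h : isLSA (S.filter (fun Λ => ¬ ({i, j} : Finset (Fin n)) ⊆ Λ)) (poly S β) ftil) :
    SSE (poly S β) ftil =
      (1 / 4) * ∑ x ∈ Finset.univ.filter (fun x : Fin n → Bool => x i = true ∧ x j = true),
        (∑ Λ ∈ S.filter (fun Λ => ({i, j} : Finset (Fin n)) ⊆ Λ),
          β Λ * mono (Λ \ {i, j}) x) ^ 2 := by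
  set S1 := S.filter (fun Λ => ¬ ({i, j} : Finset (Fin n)) ⊆ Λ) with hS1def
  set S2 := S.filter (fun Λ => ({i, j} : Finset (Fin n)) ⊆ Λ) with hS2def
  set r : (Fin n → Bool) → ℝ := fun x => ∑ Λ ∈ S2, β Λ * mono (Λ \ {i, j}) x with hrdef
  set e : (Fin n → Bool) → ℝ := fun x => (chi i x - 1/2) * (chi j x - 1/2) * r x with hedef
  set g : (Fin n → Bool) → ℝ := fun x =>
    poly S1 β x + ∑ Λ ∈ S2, β Λ * ((chi i x + chi j x)/2 - 1/4) * mono (Λ \ {i, j}) x with hgdef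
  -- basic facts about members of S2
  have hS2sub : ∀ Λ ∈ S2, ({i, j} : Finset (Fin n)) ⊆ Λ := fun Λ hΛ => (Finset.mem_filter.mp hΛ).2
  have hS2S : ∀ Λ ∈ S2, Λ ∈ S := fun Λ hΛ => (Finset.mem_filter.mp hΛ).1
  -- monomial splitting
  have hmono : ∀ Λ ∈ S2, ∀ x, mono Λ x = chi i x * chi j x * mono (Λ \ {i, j}) x := by
    intro Λ hΛ x
    unfold mono
    rw [← Finset.prod_sdiff (hS2sub Λ hΛ), Finset.prod_pair hij]
    unfold chi; ring
  -- decomposition f = g + e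
  have hdecomp : ∀ x, poly S β x = g x + e x := by
    intro x
    have hsplit : poly S β x
        = (∑ Λ ∈ S2, β Λ * mono Λ x) + poly S1 β x := by
      rw [poly, ← Finset.sum_filter_add_sum_filter_not S
        (fun Λ => ({i, j} : Finset (Fin n)) ⊆ Λ)]
      rfl
    rw [hsplit]
    have hterm : ∑ Λ ∈ S2, β Λ * mono Λ x
        = ∑ Λ ∈ S2, (β Λ * ((chi i x + chi j x)/2 - 1/4) * mono (Λ \ {i, j}) x
            + (chi i x - 1/2) * (chi j x - 1/2) * (β Λ * mono (Λ \ {i, j}) x)) := by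
      refine Finset.sum_congr rfl fun Λ hΛ => ?_
      rw [hmono Λ hΛ x]; ring
    rw [hterm, Finset.sum_add_distrib]
    simp only [hgdef, hedef, hrdef, Finset.mul_sum]
    ring
  -- invariance of r under updates at i and j
  have hrinv : ∀ (k : Fin n), (k = i ∨ k = j) → ∀ x b, r (Function.update x k b) = r x := by
    intro k hk x b
    simp only [hrdef]
    refine Finset.sum_congr rfl fun Λ hΛ => ?_
    rw [mono_update _ _ _ _ (by
      intro hmem'
      rw [Finset.mem_sdiff] at hmem'
      exact hmem'.2 (by simp [hk]))]
  -- sdiff identities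
  have hsdiffj : ∀ Λ ∈ S2, ∀ x, mono (Λ \ {j}) x = chi i x * mono (Λ \ {i, j}) x := by
    intro Λ hΛ x
    have hiΛ : i ∈ Λ := hS2sub Λ hΛ (by simp)
    have h1 : Λ \ {j} = insert i (Λ \ {i, j}) := by
      ext k
      simp only [Finset.mem_sdiff, Finset.mem_insert, Finset.mem_singleton]
      constructor
      · rintro ⟨hk, hkj⟩
        by_cases hki : k = i
        · exact Or.inl hki
        · exact Or.inr ⟨hk, by tauto⟩
      · rintro (rfl | ⟨hk, h2⟩)
        · exact ⟨hiΛ, hij⟩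
        · exact ⟨hk, by tauto⟩
    rw [h1]
    unfold mono
    rw [Finset.prod_insert (by simp)]
    rfl
  have hsdiffi : ∀ Λ ∈ S2, ∀ x, mono (Λ \ {i}) x = chi j x * mono (Λ \ {i, j}) x := by
    intro Λ hΛ x
    have hjΛ : j ∈ Λ := hS2sub Λ hΛ (by simp)
    have h1 : Λ \ {i} = insert j (Λ \ {i, j}) := by
      ext k
      simp only [Finset.mem_sdiff, Finset.mem_insert, Finset.mem_singleton]
      constructor
      · rintro ⟨hk, hki⟩
        by_cases hkj : k = j
        · exact Or.inl hkj
        · exact Or.inr ⟨hk, by tauto⟩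
      · rintro (rfl | ⟨hk, h2⟩)
        · exact ⟨hjΛ, fun hc => hij hc.symm⟩
        · exact ⟨hk, by tauto⟩
    rw [h1]
    unfold mono
    rw [Finset.prod_insert (by simp)]
    rfl
  -- membership of the deleted sets in S1
  have hmemS1 : ∀ Λ ∈ S2, (Λ \ {j} ∈ S1 ∧ Λ \ {i} ∈ S1 ∧ Λ \ {i, j} ∈ S1) := by
    intro Λ hΛ
    have hΛS := hS2S Λ hΛ
    refine ⟨?_, ?_, ?_⟩ <;> rw [hS1def, Finset.mem_filter] <;>
      refine ⟨hdense Λ hΛS _ (Finset.sdiff_subset), ?_⟩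
    · intro hc
      have := hc (show j ∈ ({i, j} : Finset (Fin n)) by simp)
      simp at this
    · intro hc
      have := hc (show i ∈ ({i, j} : Finset (Fin n)) by simp)
      simp at this
    · intro hc
      have := hc (show i ∈ ({i, j} : Finset (Fin n)) by simp)
      simp at this
  -- g is in the poly space
  have hgmem : g ∈ polySpace S1 := by
    apply Submodule.add_mem
    · exact ⟨β, rfl⟩
    · have heq : (fun x => ∑ Λ ∈ S2, β Λ * ((chi i x + chi j x)/2 - 1/4) * mono (Λ \ {i, j}) x)
          = ∑ Λ ∈ S2, ((β Λ/2) • mono (Λ \ {j}) + (β Λ/2) • mono (Λ \ {i})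
              + (-(β Λ)/4) • mono (Λ \ {i, j})) := by
        funext x
        rw [Finset.sum_apply]
        refine Finset.sum_congr rfl fun Λ hΛ => ?_
        simp only [Pi.add_apply, Pi.smul_apply, smul_eq_mul]
        rw [hsdiffj Λ hΛ x, hsdiffi Λ hΛ x]
        ring
      rw [heq]
      apply Submodule.sum_mem
      intro Λ hΛ
      obtain ⟨h1, h2, h3⟩ := hmemS1 Λ hΛ
      exact Submodule.add_mem _ (Submodule.add_mem _
        (Submodule.smul_mem _ _ (mono_mem_polySpace S1 _ h1))
        (Submodule.smul_mem _ _ (mono_mem_polySpace S1 _ h2)))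
        (Submodule.smul_mem _ _ (mono_mem_polySpace S1 _ h3))
  -- orthogonality of e to everything in the poly space
  have horthmono : ∀ Λ' ∈ S1, ∑ x : Fin n → Bool, e x * mono Λ' x = 0 := by
    intro Λ' hΛ'
    have hnot : ¬ (({i, j} : Finset (Fin n)) ⊆ Λ') := (Finset.mem_filter.mp hΛ').2
    have hcase : i ∉ Λ' ∨ j ∉ Λ' := by
      by_contra hc
      push_neg at hc
      exact hnot (by
        intro k hk
        simp only [Finset.mem_insert, Finset.mem_singleton] at hk
        rcases hk with rfl | rfl
        · exact hc.1
        · exact hc.2)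
    rcases hcase with hi' | hj'
    · have := sum_phi_zero i j (Ne.symm hij) (fun x => r x * mono Λ' x)
        (by
          intro x b
          show r (Function.update x i b) * mono Λ' (Function.update x i b) = r x * mono Λ' x
          rw [hrinv i (Or.inl rfl) x b, mono_update _ _ _ _ hi'])
      rw [← this]
      refine Finset.sum_congr rfl fun x _ => ?_
      simp only [hedef]; ring
    · have := sum_phi_zero j i hij (fun x => r x * mono Λ' x)
        (by
          intro x b
          show r (Function.update x j b) * mono Λ' (Function.update x j b) = r x * mono Λ' x
          rw [hrinv j (Or.inr rfl) x b, mono_update _ _ _ _ hj'])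
      rw [← this]
      refine Finset.sum_congr rfl fun x _ => ?_
      simp only [hedef]; ring
  have horth : ∀ γ, ∑ x : Fin n → Bool, e x * poly S1 γ x = 0 := by
    intro γ
    have hrw : ∀ x : Fin n → Bool, e x * poly S1 γ x
        = ∑ Λ' ∈ S1, γ Λ' * (e x * mono Λ' x) := by
      intro x
      rw [poly, Finset.mul_sum]
      exact Finset.sum_congr rfl fun Λ' _ => by ring
    calc ∑ x : Fin n → Bool, e x * poly S1 γ x
        = ∑ x : Fin n → Bool, ∑ Λ' ∈ S1, γ Λ' * (e x * mono Λ' x) :=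
          Finset.sum_congr rfl fun x _ => hrw x
      _ = ∑ Λ' ∈ S1, ∑ x : Fin n → Bool, γ Λ' * (e x * mono Λ' x) := Finset.sum_comm
      _ = 0 := by
          refine Finset.sum_eq_zero fun Λ' hΛ' => ?_
          rw [← Finset.mul_sum, horthmono Λ' hΛ', mul_zero]
  -- SSE expansion
  obtain ⟨γ0, hγ0⟩ := hgmem
  have hExpand : ∀ γ, SSE (poly S β) (poly S1 γ)
      = (∑ x : Fin n → Bool, (e x)^2) + ∑ x : Fin n → Bool, (g x - poly S1 γ x)^2 := by
    intro γ
    have hcross : ∑ x : Fin n → Bool, e x * (g x - poly S1 γ x) = 0 := by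
      have h1 : ∀ x : Fin n → Bool, e x * (g x - poly S1 γ x)
          = e x * poly S1 γ0 x - e x * poly S1 γ x := by
        intro x; rw [← hγ0]; ring
      rw [Finset.sum_congr rfl fun x _ => h1 x, Finset.sum_sub_distrib, horth γ0, horth γ]
      ring
    unfold SSE
    calc ∑ x : Fin n → Bool, (poly S β x - poly S1 γ x)^2
        = ∑ x : Fin n → Bool, ((e x)^2 + (g x - poly S1 γ x)^2
            + 2 * (e x * (g x - poly S1 γ x))) := by
          refine Finset.sum_congr rfl fun x _ => ?_
          rw [hdecomp x]; ring
      _ = _ := by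
          rw [Finset.sum_add_distrib, Finset.sum_add_distrib, ← Finset.mul_sum, hcross]
          ring
  obtain ⟨⟨β', hft⟩, hmin⟩ := h
  have hA : SSE (poly S β) (poly S1 γ0) = ∑ x : Fin n → Bool, (e x)^2 := by
    rw [hExpand γ0, ← hγ0]
    simp
  have hle1 : SSE (poly S β) ftil ≤ ∑ x : Fin n → Bool, (e x)^2 := by
    rw [← hA]; exact hmin γ0
  have hge1 : ∑ x : Fin n → Bool, (e x)^2 ≤ SSE (poly S β) ftil := by
    rw [hft, hExpand β']
    have : 0 ≤ ∑ x : Fin n → Bool, (g x - poly S1 β' x)^2 :=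
      Finset.sum_nonneg fun x _ => sq_nonneg _
    linarith
  have hSSE : SSE (poly S β) ftil = ∑ x : Fin n → Bool, (e x)^2 := le_antisymm hle1 hge1
  -- final computation
  have hesq : ∀ x, (e x)^2 = (1/16) * (r x)^2 := by
    intro x
    simp only [hedef]
    cases hxi : x i <;> cases hxj : x j <;> simp [chi, hxi, hxj] <;> ring
  have hr4 : ∑ x : Fin n → Bool, (r x)^2
      = 4 * ∑ x ∈ Finset.univ.filter (fun x : Fin n → Bool => x i = true ∧ x j = true),
          (r x)^2 := by
    apply sum_four i j hij
    · intro x b; rw [hrinv i (Or.inl rfl) x b]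
    · intro x b; rw [hrinv j (Or.inr rfl) x b]
  rw [hSSE]
  rw [Finset.sum_congr rfl fun x _ => hesq x, ← Finset.mul_sum, hr4]
  have hxx : ∀ x : Fin n → Bool,
      (∑ Λ ∈ S2, β Λ * mono (Λ \ {i, j}) x) ^ 2 = (r x) ^ 2 := fun x => rfl
  rw [Finset.sum_congr rfl fun x _ => hxx x]
  ring
end
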